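/- Robust accuracy of a poisoned ensemble: let m, t ∈ ℕ with t < m, let 0 < p < 1/2 with t < m(1 − 2p)/(2(1 − p)), and let X ~ Binomial(m − t, p) model the number of errors of the clean models, each clean model erring independently with probability p. Then the probability that the majority vote of the m models is correct, assuming all t poisoned models always err, is at least 1 − exp(−δ'²·μ'/(2 + δ')), where μ' = (m − t)p and δ' = (m − 2t)/(2μ') − 1; that is, P[X < m/2 − t] > 1 − exp(−δ'²·μ'/(2 + δ')). -/

import Mathlib

open Finset

private lemma log_pade_hasDeriv (y : ℝ) (hy : 0 ≤ y) :
    HasDerivAt (fun x : ℝ => Real.log (1 + x) - 2 * x / (2 + x))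
      (1 / (1 + y) - 4 / (2 + y) ^ 2) y := by
  have h1 : HasDerivAt (fun x : ℝ => 1 + x) 1 y := by
    simpa using (hasDerivAt_id y).const_add (1 : ℝ)
  have h2 : HasDerivAt (fun x : ℝ => Real.log (1 + x)) (1 / (1 + y)) y := by
    have := (Real.hasDerivAt_log (by linarith : (1 : ℝ) + y ≠ 0)).comp y h1
    rw [show (1:ℝ) / (1 + y) = (1 + y)⁻¹ * 1 by ring]; exact this
  have h3n : HasDerivAt (fun x : ℝ => 2 * x) 2 y := by
    simpa using (hasDerivAt_id y).const_mul (2 : ℝ)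
  have h3d : HasDerivAt (fun x : ℝ => 2 + x) 1 y := by
    simpa using (hasDerivAt_id y).const_add (2 : ℝ)
  have h3 : HasDerivAt (fun x : ℝ => 2 * x / (2 + x))
      ((2 * (2 + y) - 2 * y * 1) / (2 + y) ^ 2) y :=
    h3n.div h3d (by linarith)
  have h3' : HasDerivAt (fun x : ℝ => 2 * x / (2 + x)) (4 / (2 + y) ^ 2) y := by
    convert h3 using 1; ring
  exact h2.sub h3'

private lemma log_pade {x : ℝ} (hx : 0 ≤ x) : 2 * x / (2 + x) ≤ Real.log (1 + x) := by
  set f : ℝ → ℝ := fun x => Real.log (1 + x) - 2 * x / (2 + x) with hf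
  have hmono : MonotoneOn f (Set.Ici (0 : ℝ)) := by
    apply monotoneOn_of_deriv_nonneg (convex_Ici 0)
    · intro y hy
      exact ((log_pade_hasDeriv y hy).continuousAt).continuousWithinAt
    · intro y hy
      rw [interior_Ici] at hy
      exact (log_pade_hasDeriv y (le_of_lt hy)).differentiableAt.differentiableWithinAt
    · intro y hy
      rw [interior_Ici] at hy
      have hy' : (0:ℝ) < y := hy
      rw [(log_pade_hasDeriv y hy'.le).deriv]
      rw [sub_nonneg, div_le_div_iff₀ (by positivity) (by linarith)]
      nlinarith [sq_nonneg y]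
  have h0 : f 0 = 0 := by simp [hf]
  have := hmono (Set.mem_Ici.mpr le_rfl) (Set.mem_Ici.mpr hx) hx
  rw [h0] at this
  simpa [hf, sub_nonneg] using this

/-- robust accuracy of a poisoned ensemble: if `X ~ Binomial(m-t, p)` counts
the clean models' errors and all `t` poisoned models err, then
`P[X < m/2 - t] > 1 - exp(-δ'² μ'/(2+δ'))` with `μ' = (m-t)p`,
`δ' = (m-2t)/(2μ') - 1`. -/
theorem safenet_robust_accuracy
    (m t : ℕ) (htm : t < m) (p : ℝ) (hp0 : 0 < p) (hp2 : p < 1/2)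
    (htb : (t : ℝ) < (m : ℝ) * (1 - 2 * p) / (2 * (1 - p))) :
    1 - Real.exp (-(((((m : ℝ) - 2 * t) / (2 * (((m : ℝ) - t) * p)) - 1)^2
          * (((m : ℝ) - t) * p))
        / (2 + ((((m : ℝ) - 2 * t) / (2 * (((m : ℝ) - t) * p))) - 1))))
      < ∑ k ∈ Finset.univ.filter (fun k : Fin (m - t + 1) => ((k : ℕ) : ℝ) < (m : ℝ) / 2 - t),
          ((PMF.binomial (Real.toNNReal p)
              (Real.toNNReal_le_one.mpr (by linarith)) (m - t)) k).toReal := by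
  set n := m - t with hn
  have hn1 : 1 ≤ n := Nat.le_sub_of_add_le (by omega)
  have hcast : ((n : ℕ) : ℝ) = (m : ℝ) - t := by
    rw [hn, Nat.cast_sub htm.le]
  set q : ℝ := 1 - p with hq
  have hq0 : 0 < q := by rw [hq]; linarith
  have hp1 : p ≤ 1 := by linarith
  set μ : ℝ := ((m : ℝ) - t) * p with hμdef
  have hμ : 0 < μ := by
    have : (t : ℝ) < m := by exact_mod_cast htm
    apply mul_pos (by linarith) hp0
  set δ : ℝ := ((m : ℝ) - 2 * t) / (2 * μ) - 1 with hδdef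
  have hm2t : 2 * μ < (m : ℝ) - 2 * t := by
    rw [lt_div_iff₀ (by linarith : (0:ℝ) < 2 * q)] at htb
    have hμ' : μ = ((m : ℝ) - t) * p := hμdef
    have hq' : q = 1 - p := hq
    nlinarith [htb, hμ', hq']
  have hδ : 0 < δ := by
    rw [hδdef, sub_pos, lt_div_iff₀ (by linarith)]
    linarith
  set a : ℝ := (1 + δ) * μ with hadef
  have ha : a = (m : ℝ) / 2 - t := by
    rw [hadef, hδdef]
    field_simp
    ring
  have ha0 : 0 < a := by rw [hadef]; positivity
  -- real-valued pmf
  set f : Fin (n + 1) → ℝ := fun k => p ^ (k : ℕ) * q ^ (n - (k : ℕ)) * (n.choose k) with hfdef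
  have hf0 : ∀ k, 0 ≤ f k := fun k => by positivity
  have hpmf : ∀ k : Fin (n + 1),
      ((PMF.binomial (Real.toNNReal p)
          (Real.toNNReal_le_one.mpr (by linarith)) n) k).toReal = f k := by
    intro k
    rw [PMF.binomial_apply]
    have h1p : (1 : ENNReal) - (p.toNNReal : ENNReal) = ENNReal.ofReal q := by
      show (1 : ENNReal) - ENNReal.ofReal p = _
      rw [hq, ENNReal.ofReal_sub _ hp0.le, ENNReal.ofReal_one]
    rw [h1p, Fin.val_last]
    rw [ENNReal.toReal_mul, ENNReal.toReal_mul, ENNReal.toReal_pow, ENNReal.toReal_pow,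
      ENNReal.coe_toReal, Real.coe_toNNReal _ hp0.le, ENNReal.toReal_ofReal hq0.le]
    simp [hfdef]
  rw [Finset.sum_congr rfl (fun k _ => hpmf k)]
  -- total sum is 1
  have hbinth : ∀ x y : ℝ, ∑ k : Fin (n + 1), x ^ (k : ℕ) * y ^ (n - (k : ℕ)) *
      (n.choose k) = (x + y) ^ n := by
    intro x y
    rw [add_pow]
    exact Fin.sum_univ_eq_sum_range (fun j => x ^ j * y ^ (n - j) * ((n.choose j : ℕ) : ℝ)) (n + 1)
  have htotal : ∑ k : Fin (n + 1), f k = 1 := by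
    have hpq : p + q = 1 := by rw [hq]; ring
    rw [hfdef, hbinth p q, hpq, one_pow]
  have hsplit :
      (∑ k ∈ Finset.univ.filter (fun k : Fin (n + 1) => ((k : ℕ) : ℝ) < (m : ℝ) / 2 - t), f k)
      + (∑ k ∈ Finset.univ.filter
          (fun k : Fin (n + 1) => ¬ (((k : ℕ) : ℝ) < (m : ℝ) / 2 - t)), f k) = 1 := by
    rw [Finset.sum_filter_add_sum_filter_not, htotal]
  set T : ℝ := ∑ k ∈ Finset.univ.filter
      (fun k : Fin (n + 1) => ¬ (((k : ℕ) : ℝ) < (m : ℝ) / 2 - t)), f k with hTdef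
  -- Chernoff: T * (1+δ)^a ≤ (1 + p*δ)^n
  have hbase1 : (1 : ℝ) ≤ 1 + δ := by linarith
  have hkey : T * (1 + δ) ^ (a : ℝ) ≤ (1 + p * δ) ^ n := by
    rw [hTdef, Finset.sum_mul]
    have hstep : ∀ k ∈ Finset.univ.filter
        (fun k : Fin (n + 1) => ¬ (((k : ℕ) : ℝ) < (m : ℝ) / 2 - t)),
        f k * (1 + δ) ^ (a : ℝ) ≤ (p * (1 + δ)) ^ (k : ℕ) * q ^ (n - (k : ℕ)) *
          (n.choose k) := by
      intro k hk
      rw [Finset.mem_filter] at hk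
      have hka : a ≤ ((k : ℕ) : ℝ) := by rw [ha]; exact not_lt.mp hk.2
      have hr : (1 + δ) ^ (a : ℝ) ≤ (1 + δ) ^ ((k : ℕ) : ℝ) :=
        Real.rpow_le_rpow_of_exponent_le hbase1 hka
      rw [Real.rpow_natCast] at hr
      calc f k * (1 + δ) ^ (a : ℝ)
          ≤ f k * (1 + δ) ^ (k : ℕ) := by
            apply mul_le_mul_of_nonneg_left hr (hf0 k)
        _ = (p * (1 + δ)) ^ (k : ℕ) * q ^ (n - (k : ℕ)) * (n.choose k) := by
            rw [hfdef]; simp only [mul_pow]; ring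
    calc ∑ k ∈ Finset.univ.filter
          (fun k : Fin (n + 1) => ¬ (((k : ℕ) : ℝ) < (m : ℝ) / 2 - t)),
          f k * (1 + δ) ^ (a : ℝ)
        ≤ ∑ k ∈ Finset.univ.filter
          (fun k : Fin (n + 1) => ¬ (((k : ℕ) : ℝ) < (m : ℝ) / 2 - t)),
          (p * (1 + δ)) ^ (k : ℕ) * q ^ (n - (k : ℕ)) * (n.choose k) :=
          Finset.sum_le_sum hstep
      _ ≤ ∑ k : Fin (n + 1),
          (p * (1 + δ)) ^ (k : ℕ) * q ^ (n - (k : ℕ)) * (n.choose k) := by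
          apply Finset.sum_le_sum_of_subset_of_nonneg (Finset.filter_subset _ _)
          intro k _ _; positivity
      _ = (p * (1 + δ) + q) ^ n := hbinth _ _
      _ = (1 + p * δ) ^ n := by rw [hq]; ring_nf
  -- (1 + p δ)^n < exp(μ δ)
  have hexp1 : (1 + p * δ) ^ n < Real.exp (μ * δ) := by
    have h1 : 1 + p * δ < Real.exp (p * δ) := by
      have := Real.add_one_lt_exp (by positivity : p * δ ≠ 0)
      linarith
    calc (1 + p * δ) ^ n < (Real.exp (p * δ)) ^ n := by
          apply pow_lt_pow_left₀ h1 (by positivity) (by omega)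
      _ = Real.exp ((n : ℝ) * (p * δ)) := by
          rw [← Real.exp_nat_mul]
      _ = Real.exp (μ * δ) := by rw [hμdef, hcast]; ring_nf
  -- (1+δ)^a ≥ exp(a · 2δ/(2+δ))
  have hrpow : Real.exp (a * (2 * δ / (2 + δ))) ≤ (1 + δ) ^ (a : ℝ) := by
    rw [Real.rpow_def_of_pos (by linarith : (0:ℝ) < 1 + δ), Real.exp_le_exp]
    have := mul_le_mul_of_nonneg_left (log_pade hδ.le) ha0.le
    linarith [this]
  have hrpow_pos : (0 : ℝ) < (1 + δ) ^ (a : ℝ) := Real.rpow_pos_of_pos (by linarith) _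
  -- combine: T < exp(-δ² μ / (2+δ))
  have hT : T < Real.exp (-(δ ^ 2 * μ / (2 + δ))) := by
    have h1 : T < Real.exp (μ * δ) / (1 + δ) ^ (a : ℝ) := by
      rw [lt_div_iff₀ hrpow_pos]
      exact lt_of_le_of_lt hkey hexp1
    have h2 : Real.exp (μ * δ) / (1 + δ) ^ (a : ℝ)
        ≤ Real.exp (μ * δ) / Real.exp (a * (2 * δ / (2 + δ))) := by
      apply div_le_div_of_nonneg_left (Real.exp_pos _).le (Real.exp_pos _) hrpow
    have h3 : Real.exp (μ * δ) / Real.exp (a * (2 * δ / (2 + δ)))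
        = Real.exp (-(δ ^ 2 * μ / (2 + δ))) := by
      rw [← Real.exp_sub]
      congr 1
      rw [hadef]
      field_simp
      ring
    linarith
  -- finish
  linarith [hsplit, hT]
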